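/- Let γ = [[A,B],[C,D]] ∈ Sp₄(ℝ) in 2×2 blocks. Let T ∈ M₂(ℂ) be symmetric and u ∈ ℂ² a column vector with φ = ᵗu·(Im T)·u ≠ 0; set Z(T,u) = conj(T) + (2i/φ)·(Im T)·u·ᵗu·(Im T). Assume C·T + D is invertible, put T' = (A·T + B)·(C·T + D)⁻¹ and u' = (C·T + D)·u, and assume φ' = ᵗu'·(Im T')·u' ≠ 0 and C·Z(T,u) + D invertible. Then Z(T', u') = (A·Z(T,u) + B)·(C·Z(T,u) + D)⁻¹. -/

import Mathlib

set_option maxHeartbeats 1600000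


open Matrix

/-- Coerce a real `2×2` matrix to a complex one. -/
def matC (A : Matrix (Fin 2) (Fin 2) ℝ) : Matrix (Fin 2) (Fin 2) ℂ :=
  A.map (fun x => (x : ℂ))

/-- The entrywise imaginary part of a complex matrix. -/
def imMat (T : Matrix (Fin 2) (Fin 2) ℂ) : Matrix (Fin 2) (Fin 2) ℝ :=
  T.map Complex.im

/-- The standard symplectic form matrix `J = [[0, -E], [E, 0]]` in `2×2` blocks, over `ℝ`. -/
def J2R : Matrix (Fin 2 ⊕ Fin 2) (Fin 2 ⊕ Fin 2) ℝ :=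
  Matrix.fromBlocks 0 (-1) 1 0

namespace ZEq

abbrev Mc := Matrix (Fin 2) (Fin 2) ℂ
abbrev Mr := Matrix (Fin 2) (Fin 2) ℝ

lemma matC_eq (X : Mr) : matC X = X.map Complex.ofRealHom := rfl

lemma matC_mul (X Y : Mr) : matC (X * Y) = matC X * matC Y := by
  simp [matC_eq, Matrix.map_mul]

lemma matC_transpose (X : Mr) : matC Xᵀ = (matC X)ᵀ := by
  ext i j; simp [matC]

lemma matC_sub (X Y : Mr) : matC (X - Y) = matC X - matC Y := by
  ext i j; simp [matC]

lemma matC_one : matC (1 : Mr) = 1 :=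
  Matrix.map_one _ (by simp) (by simp)

lemma matC_zero : matC (0 : Mr) = 0 := by ext i j; simp [matC]

lemma matC_neg_one : matC (-1 : Mr) = -1 := by
  ext i j; simp [matC, Matrix.one_apply]; split <;> simp

lemma matC_conj (X : Mr) : (matC X).map (starRingEnd ℂ) = matC X := by
  ext i j; simp [matC]

lemma sub_conj_eq (T : Mc) :
    T - T.map (starRingEnd ℂ) = (2 * Complex.I) • matC (imMat T) := by
  ext i j
  simp [matC, imMat, Matrix.sub_apply, Complex.sub_conj]
  ring

lemma imMat_transpose (T : Mc) (hT : Tᵀ = T) : (matC (imMat T))ᵀ = matC (imMat T) := by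
  have hij : ∀ i j, T j i = T i j := by
    intro i j; conv_lhs => rw [← hT]
    rfl
  ext i j
  simp [matC, imMat, hij i j]

lemma conj_map_mul (X Y : Mc) :
    (X * Y).map (starRingEnd ℂ) = X.map (starRingEnd ℂ) * Y.map (starRingEnd ℂ) := by
  simp [Matrix.map_mul]

lemma conj_map_add (X Y : Mc) :
    (X + Y).map (starRingEnd ℂ) = X.map (starRingEnd ℂ) + Y.map (starRingEnd ℂ) := by
  ext i j; simp

lemma conj_map_inv (X : Mc) (h : IsUnit X.det) :
    X⁻¹.map (starRingEnd ℂ) = (X.map (starRingEnd ℂ))⁻¹ := by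
  symm
  apply Matrix.inv_eq_right_inv
  rw [← conj_map_mul, Matrix.mul_nonsing_inv _ h]
  exact Matrix.map_one _ (by simp) (by simp)

lemma mul_vecMulVec (P : Mc) (x y : Fin 2 → ℂ) :
    P * vecMulVec x y = vecMulVec (P.mulVec x) y := by
  ext i j
  simp [Matrix.mul_apply, Matrix.vecMulVec_apply, Matrix.mulVec, dotProduct,
    Fin.sum_univ_two]
  fin_cases i <;> simp <;> ring

lemma vecMulVec_mul (x y : Fin 2 → ℂ) (P : Mc) :
    vecMulVec x y * P = vecMulVec x (vecMul y P) := by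
  ext i j
  simp [Matrix.mul_apply, Matrix.vecMulVec_apply, Matrix.vecMul, dotProduct,
    Fin.sum_univ_two]
  ring

lemma vecMulVec_mul_vecMulVec (x y z w : Fin 2 → ℂ) :
    vecMulVec x y * vecMulVec z w = (y ⬝ᵥ z) • vecMulVec x w := by
  ext i j
  simp [Matrix.mul_apply, Matrix.vecMulVec_apply, dotProduct, Finset.sum_mul,
    Fin.sum_univ_two]
  ring

lemma vecMulVec_add_left (x y z : Fin 2 → ℂ) :
    vecMulVec (x + y) z = vecMulVec x z + vecMulVec y z := by
  ext i j; simp [Matrix.vecMulVec_apply, add_mul]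

end ZEq

namespace ZEq

section Core
variable {R : Type*} [Ring R]

lemma sym_core (a b c d at' bt' ct' dt' S : R)
    (r1 : ct' * a - at' * c = 0) (r2 : ct' * b - at' * d = -1)
    (r3 : dt' * a - bt' * c = 1) (r4 : dt' * b - bt' * d = 0) :
    (S * ct' + dt') * (a * S + b) = (S * at' + bt') * (c * S + d) := by
  rw [← sub_eq_zero, show (S * ct' + dt') * (a * S + b) - (S * at' + bt') * (c * S + d)
      = S * (ct' * a - at' * c) * S + S * (ct' * b - at' * d)
        + (dt' * a - bt' * c) * S + (dt' * b - bt' * d) from by noncomm_ring,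
    r1, r2, r3, r4]
  noncomm_ring

lemma key2_core (a b c d at' bt' ct' dt' T Tb : R)
    (r1 : ct' * a - at' * c = 0) (r2 : ct' * b - at' * d = -1)
    (r3 : dt' * a - bt' * c = 1) (r4 : dt' * b - bt' * d = 0) :
    (Tb * ct' + dt') * (a * T + b) - (Tb * at' + bt') * (c * T + d) = T - Tb := by
  rw [show (Tb * ct' + dt') * (a * T + b) - (Tb * at' + bt') * (c * T + d)
      = Tb * (ct' * a - at' * c) * T + Tb * (ct' * b - at' * d)
        + (dt' * a - bt' * c) * T + (dt' * b - bt' * d) from by noncomm_ring,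
    r1, r2, r3, r4]
  noncomm_ring

lemma key3_core (a b c at' bt' ct' dt' Tb : R)
    (r1 : ct' * a - at' * c = 0) (r3 : dt' * a - bt' * c = 1) :
    (Tb * ct' + dt') * a - (Tb * at' + bt') * c = 1 := by
  rw [show (Tb * ct' + dt') * a - (Tb * at' + bt') * c
      = Tb * (ct' * a - at' * c) + (dt' * a - bt' * c) from by noncomm_ring, r1, r3]
  noncomm_ring

end Core

lemma sp_rels (A B C D : Mr)
    (hsp : (Matrix.fromBlocks A B C D)ᵀ * J2R * Matrix.fromBlocks A B C D = J2R) :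
    (Cᵀ * A - Aᵀ * C = 0) ∧ (Cᵀ * B - Aᵀ * D = -1)
      ∧ (Dᵀ * A - Bᵀ * C = 1) ∧ (Dᵀ * B - Bᵀ * D = 0) := by
  rw [J2R, Matrix.fromBlocks_transpose, Matrix.fromBlocks_multiply,
    Matrix.fromBlocks_multiply] at hsp
  simp only [Matrix.mul_zero, Matrix.zero_mul, Matrix.mul_one, Matrix.one_mul,
    Matrix.mul_neg, Matrix.neg_mul, add_zero, zero_add, mul_one, neg_zero] at hsp
  have h := (Matrix.fromBlocks_inj.mp hsp)
  exact h

end ZEq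

namespace ZEq

lemma sp_relsC (A B C D : Mr)
    (hsp : (Matrix.fromBlocks A B C D)ᵀ * J2R * Matrix.fromBlocks A B C D = J2R) :
    ((matC C)ᵀ * matC A - (matC A)ᵀ * matC C = 0)
      ∧ ((matC C)ᵀ * matC B - (matC A)ᵀ * matC D = -1)
      ∧ ((matC D)ᵀ * matC A - (matC B)ᵀ * matC C = 1)
      ∧ ((matC D)ᵀ * matC B - (matC B)ᵀ * matC D = 0) := by
  obtain ⟨e1, e2, e3, e4⟩ := sp_rels A B C D hsp
  refine ⟨?_, ?_, ?_, ?_⟩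
  · simpa [matC_sub, matC_mul, matC_transpose, matC_zero] using congrArg matC e1
  · simpa [matC_sub, matC_mul, matC_transpose, matC_neg_one] using congrArg matC e2
  · simpa [matC_sub, matC_mul, matC_transpose, matC_one] using congrArg matC e3
  · simpa [matC_sub, matC_mul, matC_transpose, matC_zero] using congrArg matC e4

end ZEq

/-- The non-holomorphic modification `Z(T,u) = conj(T) + (2i/φ)·(Im T)·u·ᵗu·(Im T)` of the
period matrix `T` introduced by Klemm et al., where `φ = ᵗu·(Im T)·u`. -/
noncomputable def KZ (T : Matrix (Fin 2) (Fin 2) ℂ) (u : Fin 2 → ℂ) :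
    Matrix (Fin 2) (Fin 2) ℂ :=
  T.map (starRingEnd ℂ) +
    (2 * Complex.I / dotProduct u ((matC (imMat T)).mulVec u)) •
      Matrix.vecMulVec ((matC (imMat T)).mulVec u) (Matrix.vecMul u (matC (imMat T)))

open ZEq in
/-- Equivariance of the non-holomorphic embedding: for `γ = [[A,B],[C,D]] ∈ Sp₄(ℝ)`, with
`T' = (AT+B)(CT+D)⁻¹` and `u' = (CT+D)u`, one has
`Z(T',u') = (A·Z(T,u) + B)·(C·Z(T,u) + D)⁻¹`. -/
theorem Z_equivariance
    (A B C D : Matrix (Fin 2) (Fin 2) ℝ)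
    (hsp : (Matrix.fromBlocks A B C D)ᵀ * J2R * Matrix.fromBlocks A B C D = J2R)
    (T : Matrix (Fin 2) (Fin 2) ℂ) (hT : Tᵀ = T) (u : Fin 2 → ℂ)
    (hφ : dotProduct u ((matC (imMat T)).mulVec u) ≠ 0)
    (h1 : IsUnit (matC C * T + matC D))
    (hφ' : dotProduct ((matC C * T + matC D).mulVec u)
        ((matC (imMat ((matC A * T + matC B) * (matC C * T + matC D)⁻¹))).mulVec
          ((matC C * T + matC D).mulVec u)) ≠ 0)
    (h3 : IsUnit (matC C * KZ T u + matC D)) :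
    KZ ((matC A * T + matC B) * (matC C * T + matC D)⁻¹) ((matC C * T + matC D).mulVec u)
      = (matC A * KZ T u + matC B) * (matC C * KZ T u + matC D)⁻¹ := by
  obtain ⟨r1, r2, r3, r4⟩ := sp_relsC A B C D hsp
  set a := matC A with ha
  set b := matC B with hb
  set c := matC C with hc
  set d := matC D with hd
  set Tb := T.map (starRingEnd ℂ) with hTbdef
  set Y := matC (imMat T) with hYdef
  set M := c * T + d with hMdef
  set N := c * Tb + d with hNdef
  -- basic symmetry facts
  have hTbs : Tbᵀ = Tb := by
    rw [hTbdef, Matrix.transpose_map.symm, hT]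
  have hYs : Yᵀ = Y := imMat_transpose T hT
  have hsub : T - Tb = (2 * Complex.I) • Y := sub_conj_eq T
  have hNconj : M.map (starRingEnd ℂ) = N := by
    rw [hMdef, conj_map_add, conj_map_mul, hc, hd, matC_conj, matC_conj, ← hTbdef]
  have hdM : IsUnit M.det := (Matrix.isUnit_iff_isUnit_det M).mp h1
  have hdetmap : (M.map (starRingEnd ℂ)).det = (starRingEnd ℂ) M.det := by
    simp [Matrix.det_fin_two, Matrix.map_apply]
  have hdN : IsUnit N.det := by
    rw [← hNconj, hdetmap]
    exact hdM.map (starRingEnd ℂ)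
  have hdMT : IsUnit Mᵀ.det := by rwa [Matrix.det_transpose]
  have hdNT : IsUnit Nᵀ.det := by rwa [Matrix.det_transpose]
  -- symmetric pairing lemmas
  have symT : Mᵀ * (a * T + b) = (a * T + b)ᵀ * M := by
    rw [hMdef]
    simp only [Matrix.transpose_add, Matrix.transpose_mul, hT]
    exact sym_core a b c d aᵀ bᵀ cᵀ dᵀ T r1 r2 r3 r4
  have symTb : Nᵀ * (a * Tb + b) = (a * Tb + b)ᵀ * N := by
    rw [hNdef]
    simp only [Matrix.transpose_add, Matrix.transpose_mul, hTbs]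
    exact sym_core a b c d aᵀ bᵀ cᵀ dᵀ Tb r1 r2 r3 r4
  -- T' and its properties
  set T' := (a * T + b) * M⁻¹ with hT'def
  have hT's : T'ᵀ = T' := by
    rw [hT'def, Matrix.transpose_mul, Matrix.transpose_nonsing_inv]
    calc Mᵀ⁻¹ * (a * T + b)ᵀ
        = Mᵀ⁻¹ * ((a * T + b)ᵀ * M) * M⁻¹ := by
          rw [Matrix.mul_assoc ((Mᵀ)⁻¹), Matrix.mul_assoc, Matrix.mul_nonsing_inv _ hdM,
            Matrix.mul_one]
      _ = Mᵀ⁻¹ * (Mᵀ * (a * T + b)) * M⁻¹ := by rw [symT]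
      _ = (a * T + b) * M⁻¹ := by
          rw [← Matrix.mul_assoc, Matrix.nonsing_inv_mul _ hdMT, Matrix.one_mul]
  set Tb' := (a * Tb + b) * N⁻¹ with hTb'def
  have hconjT' : T'.map (starRingEnd ℂ) = Tb' := by
    rw [hT'def, conj_map_mul, conj_map_inv _ hdM, hNconj, conj_map_add, conj_map_mul,
      ha, hb, matC_conj, matC_conj, ← hTbdef, ← ha, ← hb]
  set Y' := matC (imMat T') with hY'def
  have hY's : Y'ᵀ = Y' := imMat_transpose T' hT's
  -- N^T * Tb' = (a*Tb+b)^T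
  have hNTb' : Nᵀ * Tb' = (a * Tb + b)ᵀ := by
    rw [hTb'def, ← Matrix.mul_assoc, symTb, Matrix.mul_assoc,
      Matrix.mul_nonsing_inv _ hdN, Matrix.mul_one]
  -- key computation for Im T'
  have hF7 : Nᵀ * (T' - Tb') * M = T - Tb := by
    have key := key2_core a b c d aᵀ bᵀ cᵀ dᵀ T Tb r1 r2 r3 r4
    have h1' : Nᵀ = Tb * cᵀ + dᵀ := by
      rw [hNdef]; simp only [Matrix.transpose_add, Matrix.transpose_mul, hTbs]
    have h2' : (a * Tb + b)ᵀ = Tb * aᵀ + bᵀ := by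
      simp only [Matrix.transpose_add, Matrix.transpose_mul, hTbs]
    calc Nᵀ * (T' - Tb') * M = Nᵀ * T' * M - Nᵀ * Tb' * M := by
          rw [Matrix.mul_sub, Matrix.sub_mul]
      _ = Nᵀ * (a * T + b) - (a * Tb + b)ᵀ * M := by
          rw [hNTb', hT'def, Matrix.mul_assoc (Nᵀ), Matrix.mul_assoc (a * T + b),
            Matrix.nonsing_inv_mul _ hdM, Matrix.mul_one]
      _ = T - Tb := by rw [h1', h2']; exact key
  have hY' : Y' = Nᵀ⁻¹ * Y * M⁻¹ := by
    have h2i : (2 * Complex.I) ≠ 0 := by simp [Complex.I_ne_zero]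
    have hsub' : T' - Tb' = (2 * Complex.I) • Y' := by
      rw [← hconjT']; exact sub_conj_eq T'
    have : T' - Tb' = Nᵀ⁻¹ * (T - Tb) * M⁻¹ := by
      rw [← hF7, ← Matrix.mul_assoc, ← Matrix.mul_assoc, Matrix.nonsing_inv_mul _ hdNT,
        Matrix.one_mul, Matrix.mul_assoc, Matrix.mul_nonsing_inv _ hdM, Matrix.mul_one]
    rw [hsub', hsub] at this
    apply smul_right_injective _ h2i
    simpa [Matrix.mul_smul, Matrix.smul_mul] using this
  -- vectors
  set u' := M.mulVec u with hu'def
  set v := Y.mulVec u with hvdef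
  have hvecMul : Matrix.vecMul u Y = v := by
    rw [← Matrix.mulVec_transpose, hYs, hvdef]
  set v' := Y'.mulVec u' with hv'def
  have hvecMul' : Matrix.vecMul u' Y' = v' := by
    rw [← Matrix.mulVec_transpose, hY's, hv'def]
  have hv' : v' = Nᵀ⁻¹.mulVec v := by
    rw [hv'def, hY', hu'def, Matrix.mulVec_mulVec, Matrix.mul_assoc, Matrix.mul_assoc,
      Matrix.nonsing_inv_mul _ hdM, Matrix.mul_one, ← Matrix.mulVec_mulVec, hvdef]
  -- scalars
  set p := dotProduct u v with hpdef
  set s := dotProduct v' (c.mulVec v) with hsdef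
  set p' := dotProduct u' v' with hp'def
  -- dot product transfer: ⟨x, P y⟩ = ⟨Pᵀ x, y⟩
  have dotPT : ∀ (P : Matrix (Fin 2) (Fin 2) ℂ) (x y : Fin 2 → ℂ),
      dotProduct x (P.mulVec y) = dotProduct (Pᵀ.mulVec x) y := by
    intro P x y
    rw [dotProduct_mulVec, ← Matrix.mulVec_transpose]
  have hM_N : M = N + (2 * Complex.I) • (c * Y) := by
    rw [hMdef, hNdef]
    have : c * T = c * Tb + c * (T - Tb) := by noncomm_ring
    rw [this, hsub, Matrix.mul_smul]
    abel
  have hsv : dotProduct u ((Y * cᵀ * Nᵀ⁻¹).mulVec v) = s := by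
    rw [dotProduct_mulVec, ← Matrix.vecMul_vecMul, ← Matrix.vecMul_vecMul,
      hvecMul, Matrix.vecMul_transpose, ← dotProduct_mulVec, ← hv',
      dotProduct_comm, hsdef]
  have hp' : p' = p + 2 * Complex.I * s := by
    rw [hp'def, hv', hu'def]
    rw [show dotProduct (M.mulVec u) (Nᵀ⁻¹.mulVec v)
        = dotProduct u ((Mᵀ * Nᵀ⁻¹).mulVec v) from by
      rw [dotProduct_comm, dotPT, Matrix.mulVec_mulVec, dotProduct_comm]]
    have hMTN : Mᵀ * Nᵀ⁻¹ = 1 + (2 * Complex.I) • (Y * cᵀ * Nᵀ⁻¹) := by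
      rw [hM_N]
      simp only [Matrix.transpose_add, Matrix.transpose_smul, Matrix.transpose_mul, hYs]
      rw [Matrix.add_mul, Matrix.mul_nonsing_inv _ hdNT, Matrix.smul_mul, Matrix.mul_assoc]
    rw [hMTN, Matrix.add_mulVec, Matrix.one_mulVec, Matrix.smul_mulVec,
      dotProduct_add, dotProduct_smul, hsv, smul_eq_mul, hpdef, mul_assoc]
  -- fold KZ
  have hZ : KZ T u = Tb + (2 * Complex.I / p) • Matrix.vecMulVec v v := by
    rw [KZ, ← hYdef, hvecMul, ← hvdef, ← hTbdef, ← hpdef]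
  have hZ' : KZ T' u' = Tb' + (2 * Complex.I / p') • Matrix.vecMulVec v' v' := by
    rw [KZ, ← hY'def, hvecMul', ← hv'def, hconjT', ← hp'def]
  rw [hZ', hZ]
  -- reduce to a product identity
  have hCZ : c * (Tb + (2 * Complex.I / p) • Matrix.vecMulVec v v) + d
      = N + (2 * Complex.I / p) • (c * Matrix.vecMulVec v v) := by
    rw [Matrix.mul_add, Matrix.mul_smul, hNdef]
    abel
  have hNTinv : Nᵀ⁻¹ = a - Tb' * c := by
    apply Matrix.inv_eq_right_inv
    rw [Matrix.mul_sub, ← Matrix.mul_assoc, hNTb']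
    have h1' : Nᵀ = Tb * cᵀ + dᵀ := by
      rw [hNdef]; simp only [Matrix.transpose_add, Matrix.transpose_mul, hTbs]
    have h2' : (a * Tb + b)ᵀ = Tb * aᵀ + bᵀ := by
      simp only [Matrix.transpose_add, Matrix.transpose_mul, hTbs]
    rw [h1', h2']
    exact key3_core a b c aᵀ bᵀ cᵀ dᵀ Tb r1 r3
  have hF18 : a.mulVec v = (Tb' * c).mulVec v + v' := by
    rw [hv', hNTinv, Matrix.sub_mulVec]
    abel
  have E1 : Tb' * N = a * Tb + b := by
    rw [hTb'def, Matrix.mul_assoc, Matrix.nonsing_inv_mul _ hdN, Matrix.mul_one]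
  have hvN : Matrix.vecMul v' N = v := by
    rw [← Matrix.mulVec_transpose, hv', Matrix.mulVec_mulVec, Matrix.mul_nonsing_inv _ hdNT,
      Matrix.one_mulVec]
  have E2 : Matrix.vecMulVec v' v' * N = Matrix.vecMulVec v' v := by
    rw [vecMulVec_mul, hvN]
  have E3 : Tb' * (c * Matrix.vecMulVec v v)
      = Matrix.vecMulVec ((Tb' * c).mulVec v) v := by
    rw [← Matrix.mul_assoc, mul_vecMulVec]
  have E4 : Matrix.vecMulVec v' v' * (c * Matrix.vecMulVec v v)
      = s • Matrix.vecMulVec v' v := by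
    rw [← Matrix.mul_assoc, vecMulVec_mul, vecMulVec_mul_vecMulVec,
      ← dotProduct_mulVec, ← hsdef]
  have E5 : a * Matrix.vecMulVec v v = Matrix.vecMulVec (a.mulVec v) v := ZEq.mul_vecMulVec _ _ _
  have hp'ne : p + 2 * Complex.I * s ≠ 0 := by rw [← hp']; exact hφ'
  have hmain : (Tb' + (2 * Complex.I / p') • Matrix.vecMulVec v' v')
      * (c * (Tb + (2 * Complex.I / p) • Matrix.vecMulVec v v) + d)
      = a * (Tb + (2 * Complex.I / p) • Matrix.vecMulVec v v) + b := by
    rw [hCZ]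
    rw [show (Tb' + (2 * Complex.I / p') • Matrix.vecMulVec v' v')
        * (N + (2 * Complex.I / p) • (c * Matrix.vecMulVec v v))
        = Tb' * N + (2 * Complex.I / p) • (Tb' * (c * Matrix.vecMulVec v v))
          + (2 * Complex.I / p') • (Matrix.vecMulVec v' v' * N)
          + ((2 * Complex.I / p') * (2 * Complex.I / p))
              • (Matrix.vecMulVec v' v' * (c * Matrix.vecMulVec v v)) from by
      simp only [Matrix.add_mul, Matrix.mul_add, Matrix.smul_mul, Matrix.mul_smul, smul_smul,
        smul_add]
      module]
    rw [E1, E2, E3, E4, Matrix.mul_add, Matrix.mul_smul, E5, hF18, vecMulVec_add_left, hp']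
    have h2is : Complex.I * s * 2 + p ≠ 0 := by
      intro h; exact hp'ne (by linear_combination h)
    match_scalars
    all_goals try ring
    all_goals field_simp [hφ, hp'ne, h2is]
    all_goals (ring_nf <;> simp only [Complex.I_sq, show Complex.I ^ 3 = -Complex.I by rw [pow_succ, Complex.I_sq, neg_one_mul]] <;> ring_nf)
  have hdet3 : IsUnit (c * (Tb + (2 * Complex.I / p) • Matrix.vecMulVec v v) + d).det := by
    rw [← hZ]
    exact (Matrix.isUnit_iff_isUnit_det _).mp h3
  rw [← hmain, Matrix.mul_nonsing_inv_cancel_right _ _ hdet3]
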